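/- Dines' theorem: For N ≥ 1 and symmetric matrices A₁, A₂ ∈ 𝕊^N, the joint range set {((1/2) x^T A₁ x, (1/2) x^T A₂ x) : x ∈ ℝ^N} is a convex subset of ℝ². -/

import Mathlib

open Matrix

/-- An affine function of one variable which is nonnegative at `0` and `s0`
is nonnegative on the interval between them. -/
lemma dines_affine_nonneg (c d s s0 : ℝ) (h0 : 0 ≤ c) (h1 : 0 ≤ c + s0*d)
    (hs : s ∈ Set.uIcc 0 s0) : 0 ≤ c + s*d := by
  rcases Set.mem_uIcc.mp hs with ⟨h2,h3⟩|⟨h2,h3⟩ <;> rcases le_total 0 d with hd|hd <;> nlinarith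

/-- A rank-one PSD triple comes from a vector `(α, β)`. -/
lemma dines_sqrt_pair (p q r : ℝ) (hp : 0 ≤ p) (hq : 0 ≤ q) (h : p*q = r^2) :
    ∃ α β : ℝ, α^2 = p ∧ β^2 = q ∧ α*β = r := by
  rcases eq_or_lt_of_le hp with h0|h0
  · refine ⟨0, Real.sqrt q, by simp [← h0], Real.sq_sqrt hq, ?_⟩
    have hr : r = 0 := by nlinarith [sq_nonneg r]
    simp [hr]
  · have hsp : (0:ℝ) < Real.sqrt p := Real.sqrt_pos.mpr h0
    refine ⟨Real.sqrt p, r / Real.sqrt p, Real.sq_sqrt h0.le, ?_, ?_⟩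
    · rw [div_pow, Real.sq_sqrt h0.le]
      field_simp
      nlinarith
    · field_simp

/-- IVT step: from a boundary point `s0` of the feasible region, find a point on the
affine line where the determinant vanishes, i.e. a rank-one PSD point. -/
lemma dines_ivt (t dp dq dr s0 : ℝ) (ht0 : 0 < t) (ht1 : t < 1)
    (hp0 : 0 ≤ t + s0*dp) (hq0 : 0 ≤ (1-t) + s0*dq)
    (hzero : (t + s0*dp) * ((1-t) + s0*dq) = 0) :
    ∃ s : ℝ, 0 ≤ t + s*dp ∧ 0 ≤ (1-t) + s*dq ∧
      (t + s*dp)*((1-t)+s*dq) = (s*dr)^2 := by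
  set f : ℝ → ℝ := fun s => (t + s*dp)*((1-t)+s*dq) - (s*dr)^2 with hf
  have hcont : ContinuousOn f (Set.uIcc 0 s0) :=
    (by continuity : Continuous f).continuousOn
  have hmem : (0:ℝ) ∈ Set.uIcc (f 0) (f s0) := by
    have h1 : f 0 = t*(1-t) := by simp [hf]
    have h2 : f s0 = -(s0*dr)^2 := by simp [hf, hzero]
    rw [Set.mem_uIcc]
    right
    constructor
    · rw [h2]; nlinarith [sq_nonneg (s0*dr)]
    · rw [h1]; nlinarith
  obtain ⟨s, hs, hfs⟩ := intermediate_value_uIcc hcont hmem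
  refine ⟨s, dines_affine_nonneg t dp s s0 ht0.le hp0 hs,
    dines_affine_nonneg (1-t) dq s s0 (by linarith) hq0 hs, ?_⟩
  have : (t + s*dp)*((1-t)+s*dq) - (s*dr)^2 = 0 := hfs
  linarith

/-- Find `s` making `(t + s·dp, 1-t + s·dq, s·dr)` a rank-one PSD triple. -/
lemma dines_solve (t dp dq dr : ℝ) (ht0 : 0 < t) (ht1 : t < 1)
    (hd : dp ≠ 0 ∨ dq ≠ 0 ∨ dr ≠ 0) :
    ∃ s : ℝ, 0 ≤ t + s*dp ∧ 0 ≤ (1-t) + s*dq ∧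
      (t + s*dp)*((1-t)+s*dq) = (s*dr)^2 := by
  by_cases hdp : dp = 0
  · by_cases hdq : dq = 0
    · have hdr : dr ≠ 0 := by tauto
      refine ⟨Real.sqrt (t*(1-t)) / dr, by simp [hdp]; linarith, by simp [hdq]; linarith, ?_⟩
      have hnn : 0 ≤ t*(1-t) := by nlinarith
      have hc : Real.sqrt (t*(1-t))/dr * dr = Real.sqrt (t*(1-t)) :=
        div_mul_cancel₀ _ hdr
      rw [hdp, hdq, hc, Real.sq_sqrt hnn]
      ring
    · apply dines_ivt t dp dq dr (-(1-t)/dq) ht0 ht1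
      · simp [hdp]; linarith
      · field_simp; norm_num
      · field_simp; ring
  · set s1 : ℝ := -t/dp with hs1
    have hps1 : t + s1*dp = 0 := by rw [hs1, div_mul_cancel₀ _ hdp]; ring
    by_cases hq1 : 0 ≤ (1-t) + s1*dq
    · exact dines_ivt t dp dq dr s1 ht0 ht1 (by rw [hps1]) hq1 (by rw [hps1]; ring)
    · push_neg at hq1
      have hdq : dq ≠ 0 := by
        intro h; rw [h] at hq1; simp at hq1; linarith
      set s2 : ℝ := -(1-t)/dq with hs2
      have hqs2 : (1-t) + s2*dq = 0 := by rw [hs2, div_mul_cancel₀ _ hdq]; ring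
      have hps2 : 0 ≤ t + s2*dp := by
        have hmem : s2 ∈ Set.uIcc 0 s1 := by
          rw [Set.mem_uIcc]
          rcases le_total 0 s1 with h|h
          · left
            constructor
            · by_contra hc
              push_neg at hc
              rcases le_total 0 dq with hd'|hd' <;> nlinarith
            · by_contra hc
              push_neg at hc
              rcases le_total 0 dq with hd'|hd' <;> nlinarith
          · right
            constructor
            · by_contra hc
              push_neg at hc
              rcases le_total 0 dq with hd'|hd' <;> nlinarith
            · by_contra hc
              push_neg at hc
              rcases le_total 0 dq with hd'|hd' <;> nlinarith
        exact dines_affine_nonneg t dp s2 s1 ht0.le (le_of_eq hps1.symm) hmem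
      exact dines_ivt t dp dq dr s2 ht0 ht1 hps2 (le_of_eq hqs2.symm) (by rw [hqs2]; ring)

/-- Any three vectors in `ℝ²` satisfy a nontrivial linear relation. -/
lemma dines_relation (u1 u2 v1 v2 w1 w2 : ℝ) :
    ∃ dp dq dr : ℝ, (dp ≠ 0 ∨ dq ≠ 0 ∨ dr ≠ 0) ∧
      dp*u1 + dq*v1 + dr*w1 = 0 ∧ dp*u2 + dq*v2 + dr*w2 = 0 := by
  by_cases h1 : v1*w2 - v2*w1 ≠ 0 ∨ w1*u2 - w2*u1 ≠ 0 ∨ u1*v2 - u2*v1 ≠ 0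
  · exact ⟨v1*w2 - v2*w1, w1*u2 - w2*u1, u1*v2 - u2*v1, h1, by ring, by ring⟩
  · push_neg at h1
    obtain ⟨hvw, hwu, huv⟩ := h1
    by_cases hu : u1 = 0 ∧ u2 = 0
    · exact ⟨1, 0, 0, Or.inl one_ne_zero, by simp [hu.1], by simp [hu.2]⟩
    · by_cases hu1 : u1 = 0
      · have hu2 : u2 ≠ 0 := fun h => hu ⟨hu1, h⟩
        subst hu1
        refine ⟨v2, -u2, 0, Or.inr (Or.inl (by simp [hu2])), ?_, ?_⟩
        · linear_combination huv
        · ring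
      · refine ⟨v1, -u1, 0, Or.inr (Or.inl (by simp [hu1])), ?_, ?_⟩
        · ring
        · linear_combination -huv

/-- Core scalar form of Dines' theorem in two dimensions. -/
lemma dines_core (u1 u2 v1 v2 w1 w2 t : ℝ) (ht0 : 0 ≤ t) (ht1 : t ≤ 1) :
    ∃ α β : ℝ,
      α^2*u1 + 2*α*β*w1 + β^2*v1 = t*u1 + (1-t)*v1 ∧
      α^2*u2 + 2*α*β*w2 + β^2*v2 = t*u2 + (1-t)*v2 := by
  rcases eq_or_lt_of_le ht0 with h0 | h0
  · exact ⟨0, 1, by rw [← h0]; ring, by rw [← h0]; ring⟩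
  rcases eq_or_lt_of_le ht1 with h1 | h1
  · exact ⟨1, 0, by rw [h1]; ring, by rw [h1]; ring⟩
  obtain ⟨dp, dq, dr, hd, hrel1, hrel2⟩ := dines_relation u1 u2 v1 v2 (2*w1) (2*w2)
  obtain ⟨s, hp, hq, hpq⟩ := dines_solve t dp dq dr h0 h1 hd
  obtain ⟨α, β, hα, hβ, hαβ⟩ := dines_sqrt_pair (t + s*dp) ((1-t) + s*dq) (s*dr) hp hq hpq
  refine ⟨α, β, ?_, ?_⟩
  · rw [hα, hβ]
    have : 2*α*β*w1 = (α*β)*(2*w1) := by ring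
    rw [this, hαβ]
    linear_combination s * hrel1
  · rw [hα, hβ]
    have : 2*α*β*w2 = (α*β)*(2*w2) := by ring
    rw [this, hαβ]
    linear_combination s * hrel2

/-- Expansion of a quadratic form of a symmetric matrix at a linear combination. -/
lemma dines_expand {N : ℕ} (A : Matrix (Fin N) (Fin N) ℝ) (hA : A.IsSymm)
    (x y : Fin N → ℝ) (α β : ℝ) :
    (α • x + β • y) ⬝ᵥ A.mulVec (α • x + β • y) =
      α^2 * (x ⬝ᵥ A.mulVec x) + 2*α*β*(x ⬝ᵥ A.mulVec y) + β^2 * (y ⬝ᵥ A.mulVec y) := by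
  have hsym : y ⬝ᵥ A.mulVec x = x ⬝ᵥ A.mulVec y := by
    rw [Matrix.dotProduct_mulVec, ← Matrix.mulVec_transpose, hA.eq, dotProduct_comm]
  simp only [Matrix.mulVec_add, Matrix.mulVec_smul, dotProduct_add,
    add_dotProduct, dotProduct_smul, smul_dotProduct, smul_eq_mul, hsym]
  ring

/-- Dines' theorem: the joint range of two real quadratic forms on `ℝ^N` is a convex
subset of `ℝ²`. -/
theorem stmt17 (N : ℕ) (hN : 1 ≤ N)
    (A₁ A₂ : Matrix (Fin N) (Fin N) ℝ) (h₁ : A₁.IsSymm) (h₂ : A₂.IsSymm) :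
    Convex ℝ {p : ℝ × ℝ | ∃ x : Fin N → ℝ,
      p = ((1 / 2) * (x ⬝ᵥ A₁.mulVec x), (1 / 2) * (x ⬝ᵥ A₂.mulVec x))} := by
  rintro p ⟨x, rfl⟩ q ⟨y, rfl⟩ a b ha hb hab
  obtain ⟨α, β, he1, he2⟩ := dines_core (x ⬝ᵥ A₁.mulVec x) (x ⬝ᵥ A₂.mulVec x)
    (y ⬝ᵥ A₁.mulVec y) (y ⬝ᵥ A₂.mulVec y) (x ⬝ᵥ A₁.mulVec y) (x ⬝ᵥ A₂.mulVec y)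
    a ha (by linarith)
  refine ⟨α • x + β • y, ?_⟩
  have hb' : b = 1 - a := by linarith
  rw [dines_expand A₁ h₁ x y α β, dines_expand A₂ h₂ x y α β] at *
  simp only [Prod.smul_mk, Prod.mk_add_mk, smul_eq_mul, Prod.mk.injEq]
  constructor
  · rw [hb']; linarith [he1]
  · rw [hb']; linarith [he2]
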